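/- Let f = Σ f_n zⁿ with nonnegative integer coefficients and λ = limsup |O_n(σ_f)|^{1/n} with log λ = h(σ_f) > 0 finite. Let (R_n) satisfy 0 ≤ R_n ≤ f_n for all n and limsup R_n^{1/n} < λ, with R_{n₀} < f_{n₀} for some n₀. If the loop shift σ_R (with R_n loops of length n) is strongly positive recurrent, then h(σ_R) < h(σ_f). -/

import Mathlib

open Filter ENNReal

/-- `loopCount g n` is the number of loops (not necessarily first-return) of
length `n` at the base vertex of the loop graph with `g m` first-return loops
of length `m`: each loop decomposes uniquely as a concatenation of
first-return loops, giving the renewal recursion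
`r_0 = 1`, `r_{n+1} = Σ_{k=0}^{n} g_{k+1}·r_{n-k}`.  The entropy of the loop
shift `σ_g` is `log (limsup (loopCount g n)^{1/n})`. -/
def loopCount (g : ℕ → ℕ) : ℕ → ℕ
  | 0 => 1
  | n + 1 => ∑ k ∈ Finset.range (n + 1), g (k + 1) * loopCount g (n - k)
decreasing_by exact Nat.lt_succ_of_le (Nat.sub_le n k)

namespace Stmt19Aux

/-- `k`-fold convolution power of a sequence. -/
noncomputable def conv (b : ℕ → ℝ≥0∞) : ℕ → ℕ → ℝ≥0∞
  | 0, n => if n = 0 then 1 else 0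
  | (k+1), n => ∑ p ∈ Finset.HasAntidiagonal.antidiagonal n, b p.1 * conv b k p.2

lemma conv_eq_zero {b : ℕ → ℝ≥0∞} (hb : b 0 = 0) : ∀ k n, n < k → conv b k n = 0 := by
  intro k
  induction k with
  | zero => intro n hn; omega
  | succ k ih =>
    intro n hn
    rw [conv]
    refine Finset.sum_eq_zero fun p hp => ?_
    rw [Finset.HasAntidiagonal.mem_antidiagonal] at hp
    rcases Nat.eq_zero_or_pos p.1 with h1 | h1
    · rw [show p.1 = 0 from h1, hb, zero_mul]
    · rw [ih p.2 (by omega), mul_zero]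

lemma tsum_antidiagonal_mul (u v : ℕ → ℝ≥0∞) :
    ∑' n, ∑ p ∈ Finset.HasAntidiagonal.antidiagonal n, u p.1 * v p.2 = (∑' n, u n) * (∑' n, v n) := by
  have h1 : (∑' n, u n) * (∑' n, v n) = ∑' (p : ℕ × ℕ), u p.1 * v p.2 := by
    rw [← ENNReal.tsum_mul_right]
    rw [ENNReal.tsum_prod']
    congr 1; ext i
    rw [← ENNReal.tsum_mul_left]
  rw [h1, ← Finset.HasAntidiagonal.sigmaAntidiagonalEquivProd.tsum_eq (fun p : ℕ × ℕ => u p.1 * v p.2)]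
  rw [ENNReal.tsum_sigma']
  congr 1
  ext n
  rw [← Finset.tsum_subtype]
  rfl

lemma tsum_conv (b : ℕ → ℝ≥0∞) : ∀ k, ∑' n, conv b k n = (∑' n, b n) ^ k := by
  intro k
  induction k with
  | zero =>
    simp only [conv, pow_zero]
    exact tsum_ite_eq 0 (fun _ => 1)
  | succ k ih =>
    have : ∀ n, conv b (k+1) n = ∑ p ∈ Finset.HasAntidiagonal.antidiagonal n, b p.1 * conv b k p.2 :=
      fun n => by rw [conv]
    simp only [this]
    rw [tsum_antidiagonal_mul, ih, pow_succ, mul_comm]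

lemma loopCount_mul_eq (g : ℕ → ℕ) (hg : g 0 = 0) (x : ℝ≥0∞) : ∀ n,
    (loopCount g n : ℝ≥0∞) * x ^ n
      = ∑ k ∈ Finset.range (n+1), conv (fun m => (g m : ℝ≥0∞) * x ^ m) k n := by
  set b : ℕ → ℝ≥0∞ := fun m => (g m : ℝ≥0∞) * x ^ m with hbdef
  have hb : b 0 = 0 := by simp [hbdef, hg]
  intro n
  induction n using Nat.strong_induction_on with
  | _ n ih =>
    match n with
    | 0 => simp [loopCount, conv]
    | (n+1) =>
      rw [loopCount]
      push_cast
      rw [Finset.sum_mul]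
      have step1 : ∀ k ∈ Finset.range (n+1),
          (g (k+1) : ℝ≥0∞) * (loopCount g (n-k) : ℝ≥0∞) * x ^ (n+1)
            = b (k+1) * ((loopCount g (n-k) : ℝ≥0∞) * x ^ (n-k)) := by
        intro k hk
        rw [Finset.mem_range] at hk
        have hx : x ^ (n+1) = x ^ (k+1) * x ^ (n-k) := by
          rw [← pow_add]; congr 1; omega
        rw [hx, hbdef]; ring
      rw [Finset.sum_congr rfl step1]
      have step2 : ∀ k ∈ Finset.range (n+1),
          b (k+1) * ((loopCount g (n-k) : ℝ≥0∞) * x ^ (n-k))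
            = ∑ j ∈ Finset.range (n+1), b (k+1) * conv b j (n-k) := by
        intro k hk
        rw [Finset.mem_range] at hk
        rw [ih (n-k) (by omega)]
        rw [Finset.mul_sum]
        refine Finset.sum_subset ?_ ?_
        · intro j hj
          rw [Finset.mem_range] at hj ⊢
          omega
        · intro j _ hj2
          rw [Finset.mem_range] at hj2
          rw [conv_eq_zero hb j (n-k) (by omega), mul_zero]
      rw [Finset.sum_congr rfl step2, Finset.sum_comm]
      have step3 : ∀ j, conv b (j+1) (n+1)
          = ∑ k ∈ Finset.range (n+1), b (k+1) * conv b j (n-k) := by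
        intro j
        rw [conv, Finset.Nat.sum_antidiagonal_eq_sum_range_succ_mk,
          Finset.sum_range_succ', hb, zero_mul, add_zero]
        refine Finset.sum_congr rfl fun k _ => ?_
        simp [Nat.succ_sub_succ]
      rw [Finset.sum_congr rfl (fun j _ => (step3 j).symm)]
      rw [Finset.sum_range_succ' (fun k => conv b k (n+1)) (n+1)]
      rw [show conv b 0 (n+1) = 0 by simp [conv], add_zero]

/-- The renewal identity for the loop-counting generating function. -/
lemma renewal (g : ℕ → ℕ) (hg : g 0 = 0) (x : ℝ≥0∞) :
    ∑' n, (loopCount g n : ℝ≥0∞) * x ^ n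
      = ∑' k : ℕ, (∑' n, (g n : ℝ≥0∞) * x ^ n) ^ k := by
  set b : ℕ → ℝ≥0∞ := fun m => (g m : ℝ≥0∞) * x ^ m with hbdef
  have hb : b 0 = 0 := by simp [hbdef, hg]
  calc ∑' n, (loopCount g n : ℝ≥0∞) * x ^ n
      = ∑' n, ∑' k, conv b k n := by
        refine tsum_congr fun n => ?_
        rw [loopCount_mul_eq g hg x n]
        exact (tsum_eq_sum (fun k hk => conv_eq_zero hb k n
          (by rw [Finset.mem_range] at hk; omega))).symm
    _ = ∑' k, ∑' n, conv b k n := ENNReal.tsum_comm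
    _ = ∑' k, (∑' n, b n) ^ k := tsum_congr fun k => tsum_conv b k

lemma tail_eq (g : ℕ → ℝ≥0∞) (M : ℕ) :
    ∑' n, (if n < M then 0 else g n) = ∑' k, g (k + M) := by
  rw [← Function.Injective.tsum_eq (g := fun k => k + M)
      (add_left_injective M) (f := fun n => if n < M then 0 else g n) (fun x hx => ?_)]
  · refine tsum_congr fun k => ?_
    simp
  · simp only [Set.mem_range] at hx ⊢
    rw [Function.mem_support] at hx
    by_contra h
    simp only [not_exists] at h
    have hxM : x < M := by by_contra hc; exact h (x - M) (by omega)
    simp [hxM] at hx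

lemma split_le (g : ℕ → ℝ≥0∞) (M : ℕ) :
    ∑' n, g n ≤ ∑ i ∈ Finset.range M, g i + ∑' k, g (k + M) := by
  rw [← tail_eq]
  have : ∀ n, g n ≤ (if n < M then g n else 0) + (if n < M then 0 else g n) := by
    intro n; split <;> simp
  refine (ENNReal.tsum_le_tsum this).trans ?_
  rw [ENNReal.tsum_add]
  gcongr
  rw [tsum_eq_sum (s := Finset.range M) (fun b hb => by simp [Finset.mem_range] at hb; simp [hb])]
  exact Finset.sum_le_sum fun i hi => by simp [Finset.mem_range.mp hi]

lemma tsum_ne_top_of_limsup_lt (a : ℕ → ℝ≥0∞) (ha : ∀ n, a n ≠ ∞) (x : ℝ≥0∞)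
    (h : Filter.atTop.limsup (fun n : ℕ => (a n) ^ (1 / (n : ℝ))) < x⁻¹) :
    ∑' n, a n * x ^ n ≠ ∞ := by
  rcases eq_or_ne x ∞ with hx | hx
  · rw [hx, ENNReal.inv_top] at h; exact absurd h (by simp)
  obtain ⟨b, hb1, hb2⟩ := exists_between h
  have hev := Filter.eventually_lt_of_limsup_lt hb1
  rw [Filter.eventually_atTop] at hev
  obtain ⟨N, hN⟩ := hev
  set M := max N 1 with hM
  have hbx : b * x < 1 := by
    rcases eq_or_ne x 0 with h0 | h0
    · rw [h0, mul_zero]; exact zero_lt_one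
    · calc b * x < x⁻¹ * x := (ENNReal.mul_lt_mul_iff_left h0 hx).mpr hb2
        _ = 1 := ENNReal.inv_mul_cancel h0 hx
  have key : ∀ n, M ≤ n → a n * x ^ n ≤ (b * x) ^ n := by
    intro n hn
    have hn1 : (1:ℕ) ≤ n := le_trans (le_max_right N 1) hn
    have hnR : (0:ℝ) < (n:ℝ) := by exact_mod_cast hn1
    have h1 : a n ^ (1 / (n:ℝ)) ≤ b := (hN n (le_trans (le_max_left N 1) hn)).le
    have h2 : a n ≤ b ^ n := by
      have := ENNReal.rpow_le_rpow h1 hnR.le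
      rwa [← ENNReal.rpow_mul, one_div, inv_mul_cancel₀ hnR.ne',
        ENNReal.rpow_one, ENNReal.rpow_natCast] at this
    rw [mul_pow]
    exact mul_le_mul_left h2 _
  refine ne_top_of_le_ne_top ?_ (split_le (fun n => a n * x ^ n) M)
  refine ENNReal.add_ne_top.mpr ⟨?_, ?_⟩
  · refine (ENNReal.sum_lt_top.mpr fun i _ => ?_).ne
    exact ENNReal.mul_lt_top (ha i).lt_top (ENNReal.pow_ne_top hx).lt_top
  · have hle : ∑' i, a (i + M) * x ^ (i + M) ≤ ∑' i : ℕ, (b * x) ^ i := by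
      refine ENNReal.tsum_le_tsum fun i => ?_
      refine (key (i + M) (by omega)).trans ?_
      exact pow_le_pow_of_le_one zero_le hbx.le (by omega)
    refine ne_top_of_le_ne_top ?_ hle
    rw [ENNReal.tsum_geometric]
    exact ENNReal.inv_ne_top.mpr (tsub_pos_of_lt hbx).ne'

lemma limsup_le_inv_of_tsum_ne_top (a : ℕ → ℝ≥0∞) (x : ℝ≥0∞) (hx0 : x ≠ 0) (hx : x ≠ ∞)
    (h : ∑' n, a n * x ^ n ≠ ∞) :
    Filter.atTop.limsup (fun n : ℕ => (a n) ^ (1 / (n : ℝ))) ≤ x⁻¹ := by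
  set C := ∑' n, a n * x ^ n with hC
  by_contra hlt
  push_neg at hlt
  obtain ⟨d, hd1, hd2⟩ := exists_between hlt
  have hdtop : d ≠ ∞ := (hd2.trans_le le_top).ne
  set t := d * x with ht
  have ht1 : 1 < t := by
    calc (1:ℝ≥0∞) = x⁻¹ * x := (ENNReal.inv_mul_cancel hx0 hx).symm
      _ < d * x := (ENNReal.mul_lt_mul_iff_left hx0 hx).mpr hd1
  have hinv : Tendsto (fun n : ℕ => (t⁻¹) ^ n) atTop (nhds 0) :=
    ENNReal.tendsto_pow_atTop_nhds_zero_of_lt_one (ENNReal.inv_lt_one.mpr ht1)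
  have hCpos : (0:ℝ≥0∞) < C⁻¹ := ENNReal.inv_pos.mpr h
  have hev : ∀ᶠ n : ℕ in atTop, (t⁻¹) ^ n < C⁻¹ := hinv.eventually_lt_const hCpos
  have hev2 : ∀ᶠ n : ℕ in atTop, a n ^ (1 / (n:ℝ)) ≤ d := by
    filter_upwards [hev, Filter.eventually_ge_atTop 1] with n hn hn1
    have hnR : (0:ℝ) < (n:ℝ) := by exact_mod_cast hn1
    have hCt : C < t ^ n := by
      rw [← ENNReal.inv_pow] at hn
      exact ENNReal.inv_lt_inv.mp hn
    have h1 : a n ≤ C * (x⁻¹) ^ n := by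
      have h2 : a n * x ^ n ≤ C := ENNReal.le_tsum n
      calc a n = a n * x ^ n * (x⁻¹) ^ n := by
            rw [mul_assoc, ← mul_pow, ENNReal.mul_inv_cancel hx0 hx, one_pow, mul_one]
        _ ≤ C * (x⁻¹) ^ n := mul_le_mul_left h2 _
    have h3 : a n ≤ (t * x⁻¹) ^ n := by
      refine h1.trans ?_
      rw [mul_pow]
      exact mul_le_mul_left hCt.le _
    have h4 : a n ^ (1/(n:ℝ)) ≤ t * x⁻¹ := by
      have := ENNReal.rpow_le_rpow h3 (by positivity : (0:ℝ) ≤ 1/(n:ℝ))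
      rwa [← ENNReal.rpow_natCast (t * x⁻¹) n, ← ENNReal.rpow_mul,
        mul_one_div, div_self hnR.ne', ENNReal.rpow_one] at this
    refine h4.trans ?_
    rw [ht, mul_assoc, ENNReal.mul_inv_cancel hx0 hx, mul_one]
  have : Filter.atTop.limsup (fun n : ℕ => (a n) ^ (1 / (n : ℝ))) ≤ d :=
    Filter.limsup_le_of_le (by isBoundedDefault) hev2
  exact absurd (this.trans_lt hd2) (lt_irrefl _)

lemma loopCount_mono {g g' : ℕ → ℕ} (h : ∀ n, g n ≤ g' n) :
    ∀ n, loopCount g n ≤ loopCount g' n := by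
  intro n
  induction n using Nat.strong_induction_on with
  | _ n ih =>
    match n with
    | 0 => simp [loopCount]
    | (n+1) =>
      rw [loopCount, loopCount]
      exact Finset.sum_le_sum fun k hk =>
        Nat.mul_le_mul (h _) (ih (n-k) (by rw [Finset.mem_range] at hk; omega))

/-- If the first-return generating function at `y` has value `< 1`, the loop
generating function converges at `y`, so the growth rate is at most `y⁻¹`. -/
lemma limsup_le_of_S_lt_one (g : ℕ → ℕ) (hg : g 0 = 0) (y : ℝ≥0∞) (hy0 : y ≠ 0) (hy : y ≠ ∞)
    (hS : ∑' n, (g n : ℝ≥0∞) * y ^ n < 1) :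
    Filter.atTop.limsup (fun n : ℕ => ((loopCount g n : ℝ≥0∞)) ^ (1 / (n : ℝ))) ≤ y⁻¹ := by
  refine limsup_le_inv_of_tsum_ne_top _ y hy0 hy ?_
  rw [renewal g hg y, ENNReal.tsum_geometric]
  exact ENNReal.inv_ne_top.mpr (tsub_pos_of_lt hS).ne'

end Stmt19Aux

open Stmt19Aux in
/-- Let `f = Σ f_n zⁿ` have nonnegative integer coefficients and
let `λ = limsup (loopCount f n)^{1/n}` with `h(σ_f) = log λ > 0` finite
(`λ > 1`).  Let `(R_n)` satisfy `0 ≤ R_n ≤ f_n`, `limsup R_n^{1/n} < λ`, and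
`R_{n₀} < f_{n₀}` for some `n₀`.  If the loop shift `σ_R` is strongly positive
recurrent (`limsup R_n^{1/n} < λ_R` where `log λ_R = h(σ_R)`), then
`h(σ_R) < h(σ_f)`. -/
theorem stmt19 (f R : ℕ → ℕ) (lam : ℝ)
    (hf0 : f 0 = 0) (hR0 : R 0 = 0)
    (hlam : 1 < lam)
    (hent : Filter.atTop.limsup
        (fun n : ℕ => ((loopCount f n : ℝ≥0∞)) ^ (1 / (n : ℝ)))
      = ENNReal.ofReal lam)
    (hRf : ∀ n, R n ≤ f n)
    (hRlim : Filter.atTop.limsup (fun n : ℕ => ((R n : ℝ≥0∞)) ^ (1 / (n : ℝ)))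
        < ENNReal.ofReal lam)
    (hn0 : ∃ n0, R n0 < f n0)
    (hSPR : Filter.atTop.limsup (fun n : ℕ => ((R n : ℝ≥0∞)) ^ (1 / (n : ℝ)))
        < Filter.atTop.limsup
            (fun n : ℕ => ((loopCount R n : ℝ≥0∞)) ^ (1 / (n : ℝ)))) :
    Filter.atTop.limsup (fun n : ℕ => ((loopCount R n : ℝ≥0∞)) ^ (1 / (n : ℝ)))
      < ENNReal.ofReal lam := by
  classical
  obtain ⟨n₀, hn₀⟩ := hn0
  have hn₀0 : n₀ ≠ 0 := by
    rintro rfl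
    rw [hR0, hf0] at hn₀
    omega
  set A := Filter.atTop.limsup (fun n : ℕ => ((R n : ℝ≥0∞)) ^ (1 / (n : ℝ))) with hA
  set L := Filter.atTop.limsup
      (fun n : ℕ => ((loopCount R n : ℝ≥0∞)) ^ (1 / (n : ℝ))) with hL
  have hL0 : 0 < L := (zero_le (a := A)).trans_lt hSPR
  have hLle : L ≤ ENNReal.ofReal lam := by
    rw [← hent, hL]
    refine Filter.limsup_le_limsup (Filter.Eventually.of_forall fun n => ?_)
    exact ENNReal.rpow_le_rpow (by exact_mod_cast loopCount_mono hRf n) (by positivity)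
  have hLtop : L ≠ ⊤ := (hLle.trans_lt ENNReal.ofReal_lt_top).ne
  set xr := L⁻¹ with hxr
  have hxr0 : xr ≠ 0 := ENNReal.inv_ne_zero.mpr hLtop
  have hxrtop : xr ≠ ⊤ := ENNReal.inv_ne_top.mpr hL0.ne'
  have hxrL : xr⁻¹ = L := by rw [hxr, inv_inv]
  -- Step 1 : the first-return series of `R` at `xr` is at least 1
  have step1 : 1 ≤ ∑' n, (R n : ℝ≥0∞) * xr ^ n := by
    by_contra hs
    push_neg at hs
    obtain ⟨B, hB1, hB2⟩ := exists_between hSPR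
    have hB0 : B ≠ 0 := ((zero_le (a := A)).trans_lt hB1).ne'
    set y₁ := B⁻¹ with hy₁def
    have hy₁xr : xr < y₁ := ENNReal.inv_lt_inv.mpr hB2
    have hy₁top : y₁ ≠ ⊤ := ENNReal.inv_ne_top.mpr hB0
    have hy₁0 : y₁ ≠ 0 := ENNReal.inv_ne_zero.mpr (hB2.trans_le le_top).ne
    have hfin : ∑' n, (R n : ℝ≥0∞) * y₁ ^ n ≠ ⊤ := by
      refine tsum_ne_top_of_limsup_lt _ (fun n => ENNReal.natCast_ne_top _) y₁ ?_
      rw [hy₁def, inv_inv]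
      exact hB1
    -- contradiction helper
    have contra : ∀ y : ℝ≥0∞, xr < y → y ≠ 0 → y ≠ ⊤ →
        (∑' n, (R n : ℝ≥0∞) * y ^ n) < 1 → False := by
      intro y hy hy0 hytop hSy
      have h1 : L ≤ y⁻¹ := limsup_le_of_S_lt_one R hR0 y hy0 hytop hSy
      have h2 : y⁻¹ < L := by
        rw [← hxrL]
        exact ENNReal.inv_lt_inv.mpr hy
      exact absurd (h1.trans_lt h2) (lt_irrefl _)
    set s := ∑' n, (R n : ℝ≥0∞) * xr ^ n with hsdef
    rcases eq_or_ne s 0 with hs0 | hs0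
    · -- all R n = 0
      have hRzero : ∀ n, (R n : ℝ≥0∞) * y₁ ^ n = 0 := by
        intro n
        have := (ENNReal.tsum_eq_zero.mp hs0) n
        rcases mul_eq_zero.mp this with h | h
        · rw [h, zero_mul]
        · exact absurd (pow_eq_zero_iff'.mp h).1 hxr0
      refine contra y₁ hy₁xr hy₁0 hy₁top ?_
      rw [tsum_congr hRzero]
      simp
    · obtain ⟨u, hu1, hu2⟩ := exists_between hs
      obtain ⟨v, hv1, hv2⟩ := exists_between hu2
      have hstop : s ≠ ⊤ := (hs.trans_le le_top).ne
      have hutop : u ≠ ⊤ := (hu2.trans_le le_top).ne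
      -- tail bound
      have htail := ENNReal.tendsto_sum_nat_add (fun n => (R n : ℝ≥0∞) * y₁ ^ n) hfin
      have hvu : (0:ℝ≥0∞) < v - u := tsub_pos_of_lt hv1
      obtain ⟨M, hM⟩ := Filter.eventually_atTop.mp (htail.eventually_lt_const hvu)
      have hMtail : ∑' k, (R (k + M) : ℝ≥0∞) * y₁ ^ (k + M) < v - u := hM M le_rfl
      -- choose y
      have hus1 : 1 < u / s :=
        (ENNReal.lt_div_iff_mul_lt (Or.inl hs0) (Or.inl hstop)).mpr (by rwa [one_mul])
      set φ := (u / s) ^ (1 / ((M:ℝ) + 1)) with hφdef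
      have hφ1 : 1 < φ := ENNReal.one_lt_rpow hus1 (by positivity)
      set y := min (xr * φ) y₁ with hydef
      have hyxr : xr < y := by
        refine lt_min ?_ hy₁xr
        calc xr = xr * 1 := (mul_one xr).symm
          _ < xr * φ := (ENNReal.mul_lt_mul_iff_right hxr0 hxrtop).mpr hφ1
      have hy0 : y ≠ 0 := (hxr0.bot_lt.trans hyxr).ne'
      have hytop : y ≠ ⊤ := ((min_le_right _ _).trans_lt hy₁top.lt_top).ne
      refine contra y hyxr hy0 hytop ?_
      -- head + tail bound
      refine lt_of_le_of_lt (split_le (fun n => (R n : ℝ≥0∞) * y ^ n) M) ?_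
      have hhead : ∑ i ∈ Finset.range M, (R i : ℝ≥0∞) * y ^ i ≤ u := by
        have h1 : ∀ i ∈ Finset.range M, (R i : ℝ≥0∞) * y ^ i
            ≤ φ ^ (M+1) * ((R i : ℝ≥0∞) * xr ^ i) := by
          intro i hi
          have hyle : y ^ i ≤ φ ^ (M+1) * xr ^ i := by
            calc y ^ i ≤ (xr * φ) ^ i := pow_le_pow_left' (min_le_left _ _) i
              _ = φ ^ i * xr ^ i := by rw [mul_pow, mul_comm (xr ^ i)]
              _ ≤ φ ^ (M+1) * xr ^ i := by
                  refine mul_le_mul_left (pow_le_pow_right' hφ1.le ?_) _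
                  rw [Finset.mem_range] at hi; omega
          calc (R i : ℝ≥0∞) * y ^ i ≤ (R i : ℝ≥0∞) * (φ ^ (M+1) * xr ^ i) :=
                mul_le_mul_right hyle _
            _ = φ ^ (M+1) * ((R i : ℝ≥0∞) * xr ^ i) := by ring
        refine (Finset.sum_le_sum h1).trans ?_
        rw [← Finset.mul_sum]
        have hφM : φ ^ (M+1) = u / s := by
          rw [hφdef, ← ENNReal.rpow_natCast ((u/s) ^ (1/((M:ℝ)+1))) (M+1), ← ENNReal.rpow_mul]
          rw [show ((M+1 : ℕ) : ℝ) = (M:ℝ)+1 by push_cast; ring]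
          rw [one_div, inv_mul_cancel₀ (by positivity : (M:ℝ)+1 ≠ 0), ENNReal.rpow_one]
        calc φ ^ (M+1) * ∑ i ∈ Finset.range M, (R i : ℝ≥0∞) * xr ^ i
            ≤ φ ^ (M+1) * s := mul_le_mul_right (ENNReal.sum_le_tsum _) _
          _ = u / s * s := by rw [hφM]
          _ = u := ENNReal.div_mul_cancel hs0 hstop
      have htail2 : ∑' k, (R (k + M) : ℝ≥0∞) * y ^ (k + M) < v - u := by
        refine lt_of_le_of_lt (ENNReal.tsum_le_tsum fun k => ?_) hMtail
        exact mul_le_mul_right (pow_le_pow_left' (min_le_right _ _) _) _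
      calc ∑ i ∈ Finset.range M, (R i : ℝ≥0∞) * y ^ i
            + ∑' k, (R (k + M) : ℝ≥0∞) * y ^ (k + M)
          < u + (v - u) := ENNReal.add_lt_add_of_le_of_lt (hhead.trans_lt hutop.lt_top).ne hhead htail2
        _ = v := by rw [add_comm, tsub_add_cancel_of_le hv1.le]
        _ < 1 := hv2
  -- Step 2 : add one loop of length n₀
  set R' : ℕ → ℕ := fun n => if n = n₀ then R n + 1 else R n with hR'def
  have hR'eq : ∀ n, R' n = if n = n₀ then R n + 1 else R n := fun n => rfl
  have hR'f : ∀ n, R' n ≤ f n := by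
    intro n
    rw [hR'eq]
    by_cases h : n = n₀
    · rw [if_pos h]; subst h; omega
    · rw [if_neg h]; exact hRf n
  have hR'0 : R' 0 = 0 := by
    rw [hR'eq, if_neg (fun h => hn₀0 h.symm), hR0]
  have hSR' : ∑' n, (R' n : ℝ≥0∞) * xr ^ n
      = (∑' n, (R n : ℝ≥0∞) * xr ^ n) + xr ^ n₀ := by
    have h1 : ∀ n, (R' n : ℝ≥0∞) * xr ^ n
        = (R n : ℝ≥0∞) * xr ^ n + (if n = n₀ then xr ^ n₀ else 0) := by
      intro n
      rw [hR'eq]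
      by_cases h : n = n₀
      · rw [if_pos h, if_pos h]; subst h; push_cast; ring
      · rw [if_neg h, if_neg h, add_zero]
    rw [tsum_congr h1, ENNReal.tsum_add, tsum_ite_eq]
  have hS'gt : 1 < ∑' n, (R' n : ℝ≥0∞) * xr ^ n := by
    rw [hSR']
    calc (1:ℝ≥0∞) < 1 + xr ^ n₀ :=
          ENNReal.lt_add_right one_ne_top (pow_ne_zero n₀ hxr0)
      _ ≤ (∑' n, (R n : ℝ≥0∞) * xr ^ n) + xr ^ n₀ := add_le_add_left step1 _
  -- extract a finite subsum exceeding 1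
  rw [ENNReal.tsum_eq_iSup_sum, lt_iSup_iff] at hS'gt
  obtain ⟨F, hF⟩ := hS'gt
  set N := F.sup id with hN
  set P := ∑ n ∈ F, (R' n : ℝ≥0∞) * xr ^ n with hP
  have hP1 : 1 < P := hF
  have hP0 : P ≠ 0 := (zero_lt_one.trans hP1).ne'
  have hPtop : P ≠ ⊤ := by
    refine (ENNReal.sum_lt_top.mpr fun i _ => ?_).ne
    exact ENNReal.mul_lt_top (ENNReal.natCast_ne_top _).lt_top
      (ENNReal.pow_ne_top hxrtop).lt_top
  set θ := (P⁻¹) ^ (1 / ((N:ℝ) + 1)) with hθdef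
  have hθ1 : θ < 1 := ENNReal.rpow_lt_one (ENNReal.inv_lt_one.mpr hP1) (by positivity)
  set x := θ * xr with hxdef
  have hxlt : x < xr := by
    calc x = θ * xr := hxdef
      _ < 1 * xr := (ENNReal.mul_lt_mul_iff_left hxr0 hxrtop).mpr hθ1
      _ = xr := one_mul xr
  have hθN : θ ^ (N+1) = P⁻¹ := by
    rw [hθdef, ← ENNReal.rpow_natCast ((P⁻¹) ^ (1/((N:ℝ)+1))) (N+1), ← ENNReal.rpow_mul]
    rw [show ((N+1 : ℕ) : ℝ) = (N:ℝ)+1 by push_cast; ring]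
    rw [one_div, inv_mul_cancel₀ (by positivity : (N:ℝ)+1 ≠ 0), ENNReal.rpow_one]
  have hS'x : 1 ≤ ∑' n, (R' n : ℝ≥0∞) * x ^ n := by
    have h1 : ∀ n ∈ F, θ ^ (N+1) * ((R' n : ℝ≥0∞) * xr ^ n) ≤ (R' n : ℝ≥0∞) * x ^ n := by
      intro n hn
      have hnN : n ≤ N := Finset.le_sup (f := id) hn
      have : θ ^ (N+1) * xr ^ n ≤ x ^ n := by
        calc θ ^ (N+1) * xr ^ n ≤ θ ^ n * xr ^ n :=
              mul_le_mul_left (pow_le_pow_of_le_one zero_le hθ1.le (by omega)) _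
          _ = x ^ n := by rw [hxdef, mul_pow]
      calc θ ^ (N+1) * ((R' n : ℝ≥0∞) * xr ^ n) = (R' n : ℝ≥0∞) * (θ ^ (N+1) * xr ^ n) := by
            ring
        _ ≤ (R' n : ℝ≥0∞) * x ^ n := mul_le_mul_right this _
    calc (1:ℝ≥0∞) = P⁻¹ * P := (ENNReal.inv_mul_cancel hP0 hPtop).symm
      _ = θ ^ (N+1) * P := by rw [hθN]
      _ = ∑ n ∈ F, θ ^ (N+1) * ((R' n : ℝ≥0∞) * xr ^ n) := by rw [hP, Finset.mul_sum]
      _ ≤ ∑ n ∈ F, (R' n : ℝ≥0∞) * x ^ n := Finset.sum_le_sum h1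
      _ ≤ ∑' n, (R' n : ℝ≥0∞) * x ^ n := ENNReal.sum_le_tsum _
  have htot : ∑' n, (loopCount R' n : ℝ≥0∞) * x ^ n = ⊤ := by
    rw [renewal R' hR'0 x]
    refine top_le_iff.mp ?_
    calc (⊤:ℝ≥0∞) = ∑' _ : ℕ, (1:ℝ≥0∞) := (tsum_const_eq_top_of_ne_zero one_ne_zero).symm
      _ ≤ ∑' k : ℕ, (∑' n, (R' n : ℝ≥0∞) * x ^ n) ^ k := by
          refine ENNReal.tsum_le_tsum fun k => ?_
          calc (1:ℝ≥0∞) = 1 ^ k := (one_pow k).symm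
            _ ≤ (∑' n, (R' n : ℝ≥0∞) * x ^ n) ^ k := pow_le_pow_left₀ zero_le hS'x k
  have hxinvle : x⁻¹ ≤ Filter.atTop.limsup
      (fun n : ℕ => ((loopCount R' n : ℝ≥0∞)) ^ (1 / (n : ℝ))) := by
    by_contra hc
    push_neg at hc
    exact tsum_ne_top_of_limsup_lt _ (fun n => ENNReal.natCast_ne_top _) x hc htot
  have hL'le : Filter.atTop.limsup
      (fun n : ℕ => ((loopCount R' n : ℝ≥0∞)) ^ (1 / (n : ℝ))) ≤ ENNReal.ofReal lam := by
    rw [← hent]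
    refine Filter.limsup_le_limsup (Filter.Eventually.of_forall fun n => ?_)
    exact ENNReal.rpow_le_rpow (by exact_mod_cast loopCount_mono hR'f n) (by positivity)
  calc L = xr⁻¹ := hxrL.symm
    _ < x⁻¹ := ENNReal.inv_lt_inv.mpr hxlt
    _ ≤ _ := hxinvle
    _ ≤ ENNReal.ofReal lam := hL'le
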